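/- Let P be a nonempty dense linear order without endpoints, let m ∈ P, and let Q = {x ∈ P : m ≤ x}, regarded with the induced order as a first-order structure in the language with a single binary relation < (Q is a dense linear order with least element m and no greatest element). Let D₁, D₂ ⊆ Q^n. Then there is a bijection from D₁ onto D₂ whose graph is definable in the structure (Q, <) with parameters from Q if and only if, viewing D₁ and D₂ as subsets of P^n via the inclusion Q ⊆ P, there is a bijection from D₁ onto D₂ whose graph is definable in the structure (P, <) with parameters from P. -/

import Mathlib

open FirstOrder FirstOrder.Language

attribute [local instance] FirstOrder.Language.orderStructure

/-- A subset of `Q^n` is definable if it is defined by a first-order formula in the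
language of orders with finitely many parameters from `Q`. -/
def DLODefinable {Q : Type*} [LinearOrder Q] {n : ℕ} (s : Set (Fin n → Q)) : Prop :=
  ∃ A : Set Q, A.Finite ∧ A.Definable Language.order s

/-- The graph of `f` restricted to `D₁`, as a subset of `Q^(n+m)`. -/
def graphOn {Q : Type*} {n m : ℕ} (D₁ : Set (Fin n → Q))
    (f : (Fin n → Q) → (Fin m → Q)) : Set (Fin (n + m) → Q) :=
  {z | ∃ x ∈ D₁, z = Fin.append x (f x)}

/-- A definable bijection from `D₁ ⊆ Q^n` onto `D₂ ⊆ Q^m`: a bijection from `D₁` onto `D₂`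
whose graph is a definable subset of `Q^(n+m)`. -/
def DefBij {Q : Type*} [LinearOrder Q] {n m : ℕ} (D₁ : Set (Fin n → Q))
    (D₂ : Set (Fin m → Q)) : Prop :=
  ∃ f : (Fin n → Q) → (Fin m → Q), Set.BijOn f D₁ D₂ ∧ DLODefinable (graphOn D₁ f)

namespace DLOAux

instance : Fintype Ordering where
  elems := {Ordering.lt, Ordering.eq, Ordering.gt}
  complete := by intro x; cases x <;> decide

instance orderedStructureOfLE {M : Type*} [LE M] : Language.order.OrderedStructure M :=
  ⟨fun _ => Iff.rfl⟩

section Pattern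

variable {M : Type*} [LinearOrder M]

/-- Two tuples have the same order pattern over a valuation `v` of parameters. -/
def SamePat {β : Type*} (v : β → M) {k : ℕ} (xs xs' : Fin k → M) : Prop :=
  ∀ i j : β ⊕ Fin k,
    cmp (Sum.elim v xs i) (Sum.elim v xs j) = cmp (Sum.elim v xs' i) (Sum.elim v xs' j)

theorem SamePat.symm {β : Type*} {v : β → M} {k : ℕ} {xs xs' : Fin k → M}
    (h : SamePat v xs xs') : SamePat v xs' xs := fun i j => (h i j).symm

theorem exists_pat_ext [DenselyOrdered M] {γ : Type*} [Finite γ]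
    (w w' : γ → M) (hp : ∀ i j, cmp (w i) (w j) = cmp (w' i) (w' j)) (a : M)
    (hlow : (∀ i, a < w i) → ∃ c, ∀ i, c < w' i)
    (hhigh : (∀ i, w i < a) → ∃ c, ∀ i, w' i < c) :
    ∃ a', ∀ i, cmp a (w i) = cmp a' (w' i) := by
  classical
  have hlt : ∀ i j, w i < w j ↔ w' i < w' j := fun i j => by
    rw [← cmp_eq_lt_iff, ← cmp_eq_lt_iff, hp]
  by_cases hmem : ∃ i, a = w i
  · obtain ⟨i, rfl⟩ := hmem
    exact ⟨w' i, fun j => hp i j⟩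
  push_neg at hmem
  cases isEmpty_or_nonempty γ with
  | inl h => exact ⟨a, fun i => isEmptyElim i⟩
  | inr hne =>
    have : Fintype γ := Fintype.ofFinite γ
    set L : Finset γ := Finset.univ.filter (fun i => w i < a) with hL
    set U : Finset γ := Finset.univ.filter (fun i => a < w i) with hU
    have hLU : ∀ i, i ∈ L ∨ i ∈ U := by
      intro i
      rcases lt_trichotomy a (w i) with h | h | h
      · exact Or.inr (by simp [hU, h])
      · exact absurd h (hmem i)
      · exact Or.inl (by simp [hL, h])
    by_cases hUne : U.Nonempty
    · by_cases hLne : L.Nonempty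
      · obtain ⟨i₀, hi₀, hmax⟩ := L.exists_max_image w' hLne
        obtain ⟨j₀, hj₀, hmin⟩ := U.exists_min_image w' hUne
        have hia : w i₀ < a := (Finset.mem_filter.1 hi₀).2
        have haj : a < w j₀ := (Finset.mem_filter.1 hj₀).2
        have h1 : w' i₀ < w' j₀ := (hlt i₀ j₀).1 (hia.trans haj)
        obtain ⟨a', ha1, ha2⟩ := exists_between h1
        refine ⟨a', fun i => ?_⟩
        rcases hLU i with hi | hi
        · have h2 : w i < a := (Finset.mem_filter.1 hi).2
          have h3 : w' i ≤ w' i₀ := hmax i hi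
          exact ((cmp_eq_gt_iff _ _).2 h2).trans ((cmp_eq_gt_iff _ _).2 (h3.trans_lt ha1)).symm
        · have h2 : a < w i := (Finset.mem_filter.1 hi).2
          have h3 : w' j₀ ≤ w' i := hmin i hi
          exact ((cmp_eq_lt_iff _ _).2 h2).trans ((cmp_eq_lt_iff _ _).2 (ha2.trans_le h3)).symm
      · have hall : ∀ i, a < w i := by
          intro i
          rcases hLU i with hi | hi
          · exact absurd ⟨i, hi⟩ hLne
          · exact (Finset.mem_filter.1 hi).2
        obtain ⟨c, hc⟩ := hlow hall
        exact ⟨c, fun i =>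
          ((cmp_eq_lt_iff _ _).2 (hall i)).trans ((cmp_eq_lt_iff _ _).2 (hc i)).symm⟩
    · have hall : ∀ i, w i < a := by
        intro i
        rcases hLU i with hi | hi
        · exact (Finset.mem_filter.1 hi).2
        · exact absurd ⟨i, hi⟩ hUne
      obtain ⟨c, hc⟩ := hhigh hall
      exact ⟨c, fun i =>
        ((cmp_eq_gt_iff _ _).2 (hall i)).trans ((cmp_eq_gt_iff _ _).2 (hc i)).symm⟩

theorem exists_snoc_samePat [DenselyOrdered M] {β : Type*} [Finite β] (v : β → M) {k : ℕ}
    (xs xs' : Fin k → M) (h : SamePat v xs xs') (a : M)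
    (hlow : (∀ p, a < Sum.elim v xs p) → ∃ c, ∀ p, c < Sum.elim v xs' p)
    (hhigh : (∀ p, Sum.elim v xs p < a) → ∃ c, ∀ p, Sum.elim v xs' p < c) :
    ∃ a', SamePat v (Fin.snoc xs a) (Fin.snoc xs' a') := by
  obtain ⟨a', ha⟩ := exists_pat_ext (Sum.elim v xs) (Sum.elim v xs') h a hlow hhigh
  refine ⟨a', ?_⟩
  have key : ∀ p : β ⊕ Fin (k + 1),
      (∃ q : β ⊕ Fin k, Sum.elim v (Fin.snoc xs a) p = Sum.elim v xs q ∧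
        Sum.elim v (Fin.snoc xs' a') p = Sum.elim v xs' q) ∨
      (Sum.elim v (Fin.snoc xs a) p = a ∧ Sum.elim v (Fin.snoc xs' a') p = a') := by
    rintro (b | j)
    · exact Or.inl ⟨Sum.inl b, rfl, rfl⟩
    · refine Fin.lastCases ?_ (fun j => ?_) j
      · exact Or.inr ⟨by simp, by simp⟩
      · exact Or.inl ⟨Sum.inr j, by simp, by simp⟩
  intro p r
  rcases key p with ⟨q, hq1, hq2⟩ | ⟨hq1, hq2⟩ <;> rcases key r with ⟨s, hs1, hs2⟩ | ⟨hs1, hs2⟩ <;>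
      rw [hq1, hq2, hs1, hs2]
  · exact h q s
  · exact cmp_eq_cmp_symm.1 (ha q)
  · exact ha s
  · simp [cmp_self_eq_eq]

theorem realize_iff_of_samePat {β : Type*} (v : β → M)
    (hext : ∀ (k : ℕ) (xs xs' : Fin k → M), SamePat v xs xs' → ∀ a : M,
      ∃ a', SamePat v (Fin.snoc xs a) (Fin.snoc xs' a'))
    {k : ℕ} (φ : Language.order.BoundedFormula β k) :
    ∀ xs xs' : Fin k → M, SamePat v xs xs' → (φ.Realize v xs ↔ φ.Realize v xs') := by
  have hvar : ∀ {k₀ : ℕ} (t : Language.order.Term (β ⊕ Fin k₀)), ∃ i, t = Term.var i := by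
    intro k₀ t
    cases t with
    | var i => exact ⟨i, rfl⟩
    | func f ts => exact isEmptyElim f
  induction φ with
  | falsum => intro xs xs' h; simp [BoundedFormula.Realize]
  | equal t₁ t₂ =>
    intro xs xs' h
    obtain ⟨i, rfl⟩ := hvar t₁
    obtain ⟨j, rfl⟩ := hvar t₂
    show Term.realize _ _ = Term.realize _ _ ↔ Term.realize _ _ = Term.realize _ _
    simp only [Term.realize_var]
    rw [← cmp_eq_eq_iff, h i j, cmp_eq_eq_iff]
  | rel R ts =>
    intro xs xs' h
    cases R
    obtain ⟨i, hi⟩ := hvar (ts 0)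
    obtain ⟨j, hj⟩ := hvar (ts 1)
    have hrw : ∀ ys : Fin _ → M,
        (BoundedFormula.rel Language.orderRel.le ts).Realize v ys ↔
          (Sum.elim v ys i ≤ Sum.elim v ys j) := by
      intro ys
      have h0 : (BoundedFormula.rel Language.orderRel.le ts).Realize v ys ↔
          (ts 0).realize (Sum.elim v ys) ≤ (ts 1).realize (Sum.elim v ys) := Iff.rfl
      rw [h0, hi, hj]
      simp only [Term.realize_var]
    rw [hrw xs, hrw xs']
    simp only [← not_lt]
    rw [← cmp_eq_gt_iff, h i j, cmp_eq_gt_iff]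
  | imp f₁ f₂ ih₁ ih₂ =>
    intro xs xs' h
    simp only [BoundedFormula.realize_imp]
    rw [ih₁ xs xs' h, ih₂ xs xs' h]
  | all f ih =>
    intro xs xs' h
    simp only [BoundedFormula.realize_all]
    constructor
    · intro H a'
      obtain ⟨a, ha⟩ := hext _ xs' xs h.symm a'
      exact (ih _ _ ha.symm).1 (H a)
    · intro H a
      obtain ⟨a', ha⟩ := hext _ xs xs' h a
      exact (ih _ _ ha.symm).1 (H a')

theorem exists_lt_all [NoMinOrder M] [Nonempty M] {γ : Type*} [Finite γ] (w : γ → M) :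
    ∃ c, ∀ i, c < w i := by
  cases isEmpty_or_nonempty γ with
  | inl h => exact ⟨Classical.arbitrary M, fun i => isEmptyElim i⟩
  | inr h =>
    have : Fintype γ := Fintype.ofFinite γ
    obtain ⟨i₀, -, hmin⟩ :=
      Finset.univ.exists_min_image w ⟨Classical.arbitrary γ, Finset.mem_univ _⟩
    obtain ⟨c, hc⟩ := exists_lt (w i₀)
    exact ⟨c, fun i => hc.trans_le (hmin i (Finset.mem_univ i))⟩

theorem exists_gt_all [NoMaxOrder M] [Nonempty M] {γ : Type*} [Finite γ] (w : γ → M) :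
    ∃ c, ∀ i, w i < c := by
  cases isEmpty_or_nonempty γ with
  | inl h => exact ⟨Classical.arbitrary M, fun i => isEmptyElim i⟩
  | inr h =>
    have : Fintype γ := Fintype.ofFinite γ
    obtain ⟨i₀, -, hmax⟩ :=
      Finset.univ.exists_max_image w ⟨Classical.arbitrary γ, Finset.mem_univ _⟩
    obtain ⟨c, hc⟩ := exists_gt (w i₀)
    exact ⟨c, fun i => (hmax i (Finset.mem_univ i)).trans_lt hc⟩

theorem hext_of_noMin_noMax [DenselyOrdered M] [NoMinOrder M] [NoMaxOrder M] [Nonempty M]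
    {β : Type*} [Finite β] (v : β → M) :
    ∀ (k : ℕ) (xs xs' : Fin k → M), SamePat v xs xs' → ∀ a : M,
      ∃ a', SamePat v (Fin.snoc xs a) (Fin.snoc xs' a') :=
  fun _ xs xs' h a =>
    exists_snoc_samePat v xs xs' h a (fun _ => exists_lt_all _) (fun _ => exists_gt_all _)

theorem hext_of_bot [DenselyOrdered M] [NoMaxOrder M] {β : Type*} [Finite β] (v : β → M)
    (b₀ : β) (hb₀ : ∀ x : M, v b₀ ≤ x) :
    ∀ (k : ℕ) (xs xs' : Fin k → M), SamePat v xs xs' → ∀ a : M,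
      ∃ a', SamePat v (Fin.snoc xs a) (Fin.snoc xs' a') := by
  intro k xs xs' h a
  have : Nonempty M := ⟨v b₀⟩
  exact exists_snoc_samePat v xs xs' h a
    (fun hall => absurd (hall (Sum.inl b₀)) (not_lt.2 (hb₀ a)))
    (fun _ => exists_gt_all _)

end Pattern

section Definability

variable {M : Type*} [LinearOrder M]

theorem definable_le_pair {β : Type*} (v : β → M) {k : ℕ} (i j : β ⊕ Fin k) :
    (Set.range v).Definable Language.order {xs : Fin k → M | Sum.elim v xs i ≤ Sum.elim v xs j} := by
  rw [Set.definable_iff_exists_formula_sum]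
  let tm : β ⊕ Fin k → Language.order.Term ((↥(Set.range v) ⊕ Fin k) ⊕ Fin 0) := fun p =>
    Term.var (Sum.inl (Sum.elim (fun b => Sum.inl ⟨v b, Set.mem_range_self b⟩) Sum.inr p))
  refine ⟨Term.le (tm i) (tm j), ?_⟩
  ext xs
  have hval : ∀ p : β ⊕ Fin k,
      (tm p).realize (Sum.elim (Sum.elim (Subtype.val : ↥(Set.range v) → M) xs) default) =
        Sum.elim v xs p := by
    rintro (b | l) <;> rfl
  show _ ↔ (Term.le (tm i) (tm j)).Realize (Sum.elim Subtype.val xs) default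
  rw [Term.realize_le, hval i, hval j]
  rfl

theorem definable_cmp_pair {β : Type*} (v : β → M) {k : ℕ} (i j : β ⊕ Fin k) (c : Ordering) :
    (Set.range v).Definable Language.order
      {xs : Fin k → M | cmp (Sum.elim v xs i) (Sum.elim v xs j) = c} := by
  cases c with
  | lt =>
    have : {xs : Fin k → M | cmp (Sum.elim v xs i) (Sum.elim v xs j) = Ordering.lt} =
        {xs : Fin k → M | Sum.elim v xs i ≤ Sum.elim v xs j} ∩
          {xs : Fin k → M | Sum.elim v xs j ≤ Sum.elim v xs i}ᶜ := by
      ext xs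
      simp only [Set.mem_inter_iff, Set.mem_compl_iff, Set.mem_setOf_eq, cmp_eq_lt_iff]
      exact lt_iff_le_not_ge
    rw [this]
    exact (definable_le_pair v i j).inter (definable_le_pair v j i).compl
  | eq =>
    have : {xs : Fin k → M | cmp (Sum.elim v xs i) (Sum.elim v xs j) = Ordering.eq} =
        {xs : Fin k → M | Sum.elim v xs i ≤ Sum.elim v xs j} ∩
          {xs : Fin k → M | Sum.elim v xs j ≤ Sum.elim v xs i} := by
      ext xs
      simp only [Set.mem_inter_iff, Set.mem_setOf_eq, cmp_eq_eq_iff]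
      exact le_antisymm_iff
    rw [this]
    exact (definable_le_pair v i j).inter (definable_le_pair v j i)
  | gt =>
    have : {xs : Fin k → M | cmp (Sum.elim v xs i) (Sum.elim v xs j) = Ordering.gt} =
        {xs : Fin k → M | Sum.elim v xs j ≤ Sum.elim v xs i} ∩
          {xs : Fin k → M | Sum.elim v xs i ≤ Sum.elim v xs j}ᶜ := by
      ext xs
      simp only [Set.mem_inter_iff, Set.mem_compl_iff, Set.mem_setOf_eq, cmp_eq_gt_iff]
      exact lt_iff_le_not_ge
    rw [this]
    exact (definable_le_pair v j i).inter (definable_le_pair v i j).compl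

theorem dlodef_of_pat_invariant {β : Type*} [Finite β] (v : β → M) {k : ℕ}
    (S : Set (Fin k → M)) (hinv : ∀ xs xs', SamePat v xs xs' → xs ∈ S → xs' ∈ S) :
    DLODefinable S := by
  classical
  haveI : Fintype β := Fintype.ofFinite β
  refine ⟨Set.range v, Set.finite_range v, ?_⟩
  let F : (Fin k → M) → ((β ⊕ Fin k) × (β ⊕ Fin k) → Ordering) :=
    fun xs p => cmp (Sum.elim v xs p.1) (Sum.elim v xs p.2)
  have hS : S = ⋃ c ∈ (Set.toFinite (F '' S)).toFinset, F ⁻¹' {c} := by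
    ext xs
    simp only [Set.mem_iUnion, Set.Finite.mem_toFinset, Set.mem_image, Set.mem_preimage,
      Set.mem_singleton_iff, exists_prop]
    constructor
    · intro hxs
      exact ⟨F xs, ⟨xs, hxs, rfl⟩, rfl⟩
    · rintro ⟨c, ⟨xs', hxs', rfl⟩, hc⟩
      refine hinv xs' xs (fun i j => ?_) hxs'
      exact (congrFun hc (i, j)).symm
  rw [hS]
  apply Set.definable_biUnion_finset
  intro c
  have : F ⁻¹' {c} = ⋂ p ∈ (Finset.univ : Finset ((β ⊕ Fin k) × (β ⊕ Fin k))),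
      {xs : Fin k → M | cmp (Sum.elim v xs p.1) (Sum.elim v xs p.2) = c p} := by
    ext xs
    simp [F, funext_iff]
  rw [this]
  exact Set.definable_biInter_finset (fun p => definable_cmp_pair v p.1 p.2 (c p)) _

theorem realize_iff_of_samePat' {β : Type*} (v : β → M)
    (hext : ∀ (k : ℕ) (xs xs' : Fin k → M), SamePat v xs xs' → ∀ a : M,
      ∃ a', SamePat v (Fin.snoc xs a) (Fin.snoc xs' a'))
    {k : ℕ} (φ : Language.order.Formula (β ⊕ Fin k)) (xs xs' : Fin k → M)
    (h : SamePat v xs xs') :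
    φ.Realize (Sum.elim v xs) ↔ φ.Realize (Sum.elim v xs') := by
  have main := realize_iff_of_samePat v hext
    (BoundedFormula.relabel (id : β ⊕ Fin k → β ⊕ Fin k) φ) xs xs' h
  have conv : ∀ ys : Fin k → M,
      (BoundedFormula.relabel (id : β ⊕ Fin k → β ⊕ Fin k) φ).Realize v ys ↔
        φ.Realize (Sum.elim v ys) := by
    intro ys
    rw [BoundedFormula.realize_relabel]
    have h1 : (Sum.elim v (ys ∘ Fin.castAdd 0) ∘ id) = Sum.elim v ys := by
      funext p
      rcases p with b | l
      · rfl
      · show ys (Fin.castAdd 0 l) = ys l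
        congr 1
    rw [h1]
    exact iff_of_eq
      (congrArg (BoundedFormula.Realize φ (Sum.elim v ys)) (Subsingleton.elim _ _))
  rw [← conv xs, ← conv xs']
  exact main

end Definability

section Transfer

variable {P : Type*} [LinearOrder P] [DenselyOrdered P] [NoMinOrder P] [NoMaxOrder P] [Nonempty P]

instance (m : P) : DenselyOrdered {x : P // m ≤ x} := by
  constructor
  rintro ⟨a, ha⟩ ⟨b, hb⟩ hab
  obtain ⟨z, h1, h2⟩ := exists_between (show a < b from hab)
  exact ⟨⟨z, ha.trans h1.le⟩, h1, h2⟩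

instance (m : P) : NoMaxOrder {x : P // m ≤ x} := by
  constructor
  rintro ⟨a, ha⟩
  obtain ⟨z, hz⟩ := exists_gt a
  exact ⟨⟨z, ha.trans hz.le⟩, hz⟩

theorem cmp_coe {m : P} (a b : {x : P // m ≤ x}) : cmp a b = cmp (a : P) (b : P) := by
  rcases lt_trichotomy a b with h | h | h
  · rw [(cmp_eq_lt_iff _ _).2 h, (cmp_eq_lt_iff (a : P) (b : P)).2 (Subtype.coe_lt_coe.2 h)]
  · rw [h, cmp_self_eq_eq, cmp_self_eq_eq]
  · rw [(cmp_eq_gt_iff _ _).2 h, (cmp_eq_gt_iff (a : P) (b : P)).2 (Subtype.coe_lt_coe.2 h)]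

/-- If `G ⊆ Q^k` is definable in `Q = [m, ∞)`, then its image in `P^k` is definable in `P`. -/
theorem dlodef_image (m : P) {k : ℕ} (G : Set (Fin k → {x : P // m ≤ x}))
    (hG : DLODefinable G) :
    DLODefinable ((fun (x : Fin k → {x : P // m ≤ x}) (i : Fin k) => (x i : P)) '' G) := by
  classical
  obtain ⟨A, hA, hdef⟩ := hG
  rw [Set.definable_iff_exists_formula_sum] at hdef
  obtain ⟨φ, hφ⟩ := hdef
  haveI : Finite A := hA
  let vP : A ⊕ Unit → P := Sum.elim (fun a => ((a : {x : P // m ≤ x}) : P)) (fun _ => m)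
  let vQ : A ⊕ Unit → {x : P // m ≤ x} :=
    Sum.elim (fun a => (a : {x : P // m ≤ x})) (fun _ => ⟨m, le_rfl⟩)
  let ψ : Language.order.Formula ((A ⊕ Unit) ⊕ Fin k) :=
    φ.relabel (Sum.map Sum.inl id)
  have hψ : ∀ xs : Fin k → {x : P // m ≤ x}, xs ∈ G ↔ ψ.Realize (Sum.elim vQ xs) := by
    intro xs
    rw [hφ, Set.mem_setOf_eq, show ψ = φ.relabel (Sum.map Sum.inl id) from rfl,
      Formula.realize_relabel]
    have h1 : (Sum.elim vQ xs ∘ Sum.map Sum.inl id) =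
        Sum.elim (Subtype.val : A → {x : P // m ≤ x}) xs := by
      funext p
      rcases p with b | l <;> rfl
    rw [h1]
  apply dlodef_of_pat_invariant vP
  intro xs xs' hpat hmem
  obtain ⟨y, hy, rfl⟩ := hmem
  have hge : ∀ i, m ≤ xs' i := by
    intro i
    have h := hpat (Sum.inl (Sum.inr ())) (Sum.inr i)
    have h1 : ¬ (Sum.elim vP (fun i => ((y i : {x : P // m ≤ x}) : P)) (Sum.inr i) <
        Sum.elim vP (fun i => ((y i : {x : P // m ≤ x}) : P)) (Sum.inl (Sum.inr ()))) :=
      not_lt.2 (y i).2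
    rw [← cmp_eq_gt_iff, h, cmp_eq_gt_iff] at h1
    exact not_lt.1 h1
  refine ⟨fun i => ⟨xs' i, hge i⟩, ?_, rfl⟩
  have hpatQ : SamePat vQ y (fun i => (⟨xs' i, hge i⟩ : {x : P // m ≤ x})) := by
    intro p r
    have h := hpat p r
    rw [cmp_coe, cmp_coe]
    have hval : ∀ (z : Fin k → {x : P // m ≤ x}) (p : (A ⊕ Unit) ⊕ Fin k),
        ((Sum.elim vQ z p : {x : P // m ≤ x}) : P) =
          Sum.elim vP (fun i => ((z i : {x : P // m ≤ x}) : P)) p := by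
      rintro z (b | l)
      · rcases b with b | b <;> rfl
      · rfl
    rw [hval y p, hval y r, hval _ p, hval _ r]
    exact h
  rw [hψ] at hy ⊢
  exact (realize_iff_of_samePat' vQ
    (hext_of_bot vQ (Sum.inr ()) (fun x => x.2)) ψ y _ hpatQ).1 hy

/-- If `S ⊆ P^k` is definable in `P`, then its trace on `Q = [m, ∞)` is definable in `Q`. -/
theorem dlodef_preimage (m : P) {k : ℕ} (S : Set (Fin k → P)) (hS : DLODefinable S) :
    DLODefinable {z : Fin k → {x : P // m ≤ x} | (fun i => (z i : P)) ∈ S} := by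
  classical
  obtain ⟨A, hA, hdef⟩ := hS
  rw [Set.definable_iff_exists_formula_sum] at hdef
  obtain ⟨φ, hφ⟩ := hdef
  haveI : Finite A := hA
  let vP : A ⊕ Unit → P := Sum.elim (fun a => (a : P)) (fun _ => m)
  let vQ : A ⊕ Unit → {x : P // m ≤ x} := fun b =>
    if h : m ≤ vP b then ⟨vP b, h⟩ else ⟨m, le_rfl⟩
  let ψ : Language.order.Formula ((A ⊕ Unit) ⊕ Fin k) :=
    φ.relabel (Sum.map Sum.inl id)
  have hψ : ∀ xs : Fin k → P, xs ∈ S ↔ ψ.Realize (Sum.elim vP xs) := by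
    intro xs
    rw [hφ, Set.mem_setOf_eq, show ψ = φ.relabel (Sum.map Sum.inl id) from rfl,
      Formula.realize_relabel]
    have h1 : (Sum.elim vP xs ∘ Sum.map Sum.inl id) =
        Sum.elim (Subtype.val : A → P) xs := by
      funext p
      rcases p with b | l <;> rfl
    rw [h1]
  apply dlodef_of_pat_invariant vQ
  intro z z' hpat hmem
  have hcase : ∀ (z z' : Fin k → {x : P // m ≤ x}) (p : (A ⊕ Unit) ⊕ Fin k),
      (Sum.elim vP (fun i => (z i : P)) p = ((Sum.elim vQ z p : {x : P // m ≤ x}) : P) ∧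
        Sum.elim vP (fun i => (z' i : P)) p = ((Sum.elim vQ z' p : {x : P // m ≤ x}) : P)) ∨
      (Sum.elim vP (fun i => (z i : P)) p = Sum.elim vP (fun i => (z' i : P)) p ∧
        Sum.elim vP (fun i => (z i : P)) p < m) := by
    rintro z z' (b | l)
    · by_cases h : m ≤ vP b
      · have hvq : vQ b = ⟨vP b, h⟩ := dif_pos h
        refine Or.inl ⟨?_, ?_⟩ <;>
          · show vP b = ((vQ b : {x : P // m ≤ x}) : P)
            rw [hvq]
      · exact Or.inr ⟨rfl, not_le.1 h⟩
    · exact Or.inl ⟨rfl, rfl⟩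
  have hpatP : SamePat vP (fun i => (z i : P)) (fun i => (z' i : P)) := by
    intro p r
    rcases hcase z z' p with ⟨hp1, hp2⟩ | ⟨hp1, hp2⟩ <;>
        rcases hcase z z' r with ⟨hr1, hr2⟩ | ⟨hr1, hr2⟩
    · rw [hp1, hp2, hr1, hr2, ← cmp_coe, ← cmp_coe]
      exact hpat p r
    · have h1 : Sum.elim vP (fun i => (z i : P)) r <
          ((Sum.elim vQ z p : {x : P // m ≤ x}) : P) :=
        hr2.trans_le (Sum.elim vQ z p).2
      have h2 : Sum.elim vP (fun i => (z i : P)) r <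
          ((Sum.elim vQ z' p : {x : P // m ≤ x}) : P) :=
        hr2.trans_le (Sum.elim vQ z' p).2
      rw [hp1, hp2, ← hr1, (cmp_eq_gt_iff _ _).2 h1, (cmp_eq_gt_iff _ _).2 h2]
    · have h1 : Sum.elim vP (fun i => (z i : P)) p <
          ((Sum.elim vQ z r : {x : P // m ≤ x}) : P) :=
        hp2.trans_le (Sum.elim vQ z r).2
      have h2 : Sum.elim vP (fun i => (z i : P)) p <
          ((Sum.elim vQ z' r : {x : P // m ≤ x}) : P) :=
        hp2.trans_le (Sum.elim vQ z' r).2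
      rw [hr1, hr2, ← hp1, (cmp_eq_lt_iff _ _).2 h1, (cmp_eq_lt_iff _ _).2 h2]
    · rw [hp1, hr1]
  have hmem' : (fun i => (z i : P)) ∈ S := hmem
  show (fun i => (z' i : P)) ∈ S
  rw [hψ] at hmem'
  rw [hψ]
  exact (realize_iff_of_samePat' vP (hext_of_noMin_noMax vP) ψ _ _ hpatP).1 hmem'

end Transfer

theorem comp_append {α γ : Type*} {n m : ℕ} (g : α → γ) (a : Fin n → α) (b : Fin m → α) :
    g ∘ Fin.append a b = Fin.append (g ∘ a) (g ∘ b) := by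
  funext i
  refine Fin.addCases (fun i => ?_) (fun i => ?_) i <;>
    simp [Fin.append_left, Fin.append_right]

end DLOAux

/-- For a DLO `P` without endpoints and the DLO `Q = [m, ∞) ⊆ P` with least element `m`,
two subsets of `Q^n` are in definable bijection in the structure `(Q, <)` iff they are in
definable bijection in `(P, <)` when viewed as subsets of `P^n`. -/
theorem dlo_with_endpoint_defBij_iff {P : Type*} [LinearOrder P] [DenselyOrdered P]
    [NoMinOrder P] [NoMaxOrder P] [Nonempty P] (m : P) {n : ℕ}
    (D₁ D₂ : Set (Fin n → {x : P // m ≤ x})) :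
    DefBij D₁ D₂ ↔
      DefBij ((fun (x : Fin n → {x : P // m ≤ x}) (i : Fin n) => (x i : P)) '' D₁)
        ((fun (x : Fin n → {x : P // m ≤ x}) (i : Fin n) => (x i : P)) '' D₂) := by
  classical
  let ι : (Fin n → {x : P // m ≤ x}) → (Fin n → P) := fun x i => (x i : P)
  let ι₂ : (Fin (n + n) → {x : P // m ≤ x}) → (Fin (n + n) → P) := fun x i => (x i : P)
  have hιinj : Function.Injective ι := by
    intro x y h
    funext i
    exact Subtype.ext (congrFun h i)
  have hι₂inj : Function.Injective ι₂ := by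
    intro x y h
    funext i
    exact Subtype.ext (congrFun h i)
  have happend : ∀ x y : Fin n → {x : P // m ≤ x},
      ι₂ (Fin.append x y) = Fin.append (ι x) (ι y) := by
    intro x y
    exact DLOAux.comp_append Subtype.val x y
  show DefBij D₁ D₂ ↔ DefBij (ι '' D₁) (ι '' D₂)
  constructor
  · rintro ⟨f, hbij, hdef⟩
    let g : (Fin n → P) → (Fin n → P) := fun x =>
      if h : ∃ y ∈ D₁, ι y = x then ι (f (Classical.choose h)) else x
    have hgval : ∀ y, y ∈ D₁ → g (ι y) = ι (f y) := by
      intro y hy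
      have hex : ∃ w ∈ D₁, ι w = ι y := ⟨y, hy, rfl⟩
      have h1 : g (ι y) = ι (f (Classical.choose hex)) := dif_pos hex
      rw [h1, hιinj (Classical.choose_spec hex).2]
    refine ⟨g, ⟨?_, ?_, ?_⟩, ?_⟩
    · rintro x ⟨y, hy, rfl⟩
      rw [hgval y hy]
      exact ⟨f y, hbij.mapsTo hy, rfl⟩
    · rintro x ⟨y, hy, rfl⟩ x' ⟨y', hy', rfl⟩ hxy
      rw [hgval y hy, hgval y' hy'] at hxy
      rw [hbij.injOn hy hy' (hιinj hxy)]
    · rintro x ⟨y, hy, rfl⟩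
      obtain ⟨w, hw, hfw⟩ := hbij.surjOn hy
      exact ⟨ι w, ⟨w, hw, rfl⟩, by rw [hgval w hw, hfw]⟩
    · have hgraph : graphOn (ι '' D₁) g = ι₂ '' graphOn D₁ f := by
        ext z
        constructor
        · rintro ⟨x, ⟨y, hy, rfl⟩, rfl⟩
          exact ⟨Fin.append y (f y), ⟨y, hy, rfl⟩, by rw [happend, hgval y hy]⟩
        · rintro ⟨w, ⟨y, hy, rfl⟩, rfl⟩
          exact ⟨ι y, ⟨y, hy, rfl⟩, by rw [happend, hgval y hy]⟩
      show DLODefinable (graphOn (ι '' D₁) g)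
      rw [hgraph]
      exact DLOAux.dlodef_image m _ hdef
  · rintro ⟨g, hbij, hdef⟩
    have hmaps : ∀ x, x ∈ D₁ → ∃ w ∈ D₂, ι w = g (ι x) := fun x hx =>
      hbij.mapsTo ⟨x, hx, rfl⟩
    let f : (Fin n → {x : P // m ≤ x}) → (Fin n → {x : P // m ≤ x}) := fun x =>
      if h : x ∈ D₁ then Classical.choose (hmaps x h) else x
    have hfval : ∀ x (hx : x ∈ D₁), f x ∈ D₂ ∧ ι (f x) = g (ι x) := by
      intro x hx
      have h1 : f x = Classical.choose (hmaps x hx) := dif_pos hx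
      rw [h1]
      exact Classical.choose_spec (hmaps x hx)
    refine ⟨f, ⟨?_, ?_, ?_⟩, ?_⟩
    · intro x hx
      exact (hfval x hx).1
    · intro x hx x' hx' hxx'
      have h1 : g (ι x) = g (ι x') := by
        rw [← (hfval x hx).2, ← (hfval x' hx').2, hxx']
      exact hιinj (hbij.injOn ⟨x, hx, rfl⟩ ⟨x', hx', rfl⟩ h1)
    · intro y hy
      obtain ⟨w, ⟨x, hx, rfl⟩, hgw⟩ := hbij.surjOn ⟨y, hy, rfl⟩
      refine ⟨x, hx, hιinj ?_⟩
      rw [(hfval x hx).2, hgw]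
    · have hgraph : graphOn D₁ f =
          {z : Fin (n + n) → {x : P // m ≤ x} | (fun i => (z i : P)) ∈
            graphOn (ι '' D₁) g} := by
        ext z
        constructor
        · rintro ⟨x, hx, rfl⟩
          refine ⟨ι x, ⟨x, hx, rfl⟩, ?_⟩
          show ι₂ (Fin.append x (f x)) = _
          rw [happend, (hfval x hx).2]
        · rintro ⟨w, ⟨x, hx, rfl⟩, hz⟩
          refine ⟨x, hx, hι₂inj ?_⟩
          show ι₂ z = ι₂ (Fin.append x (f x))
          rw [happend, (hfval x hx).2]
          exact hz
      show DLODefinable (graphOn D₁ f)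
      rw [hgraph]
      exact DLOAux.dlodef_preimage m _ hdef
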